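/- Let d : Fin k → ZMod 2 be a data vector and let c be its encoding by a concatenation of k repetition codes of length 3: c(3j) = c(3j+1) = c(3j+2) = d j for each j. Let e be a binary error sequence of length 3k satisfying the spacing constraint that every one is followed by at least two zeros (for all i, e i = 1 implies e (i+1) = 0 and e (i+2) = 0 whenever those indices are in range), and let y = c + e be the received vector. Then for every j, at least two of the three values y(3j), y(3j+1), y(3j+2) equal d j; consequently majority decoding of each length-3 block recovers d exactly, i.e., all errors are corrected. -/
import Mathlib


/-- Majority vote of three bits over the binary field: `maj a b c = ab + bc + ca`,
which equals the bit occurring at least twice among `a, b, c`. -/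
def maj (a b c : ZMod 2) : ZMod 2 := a * b + b * c + a * c

/-- Let `d : Fin k → ZMod 2` be a data vector, `c` its encoding by a concatenation of
`k` repetition codes of length 3 (`c (3j) = c (3j+1) = c (3j+2) = d j`), `e` an error
sequence of length `3k` satisfying the spacing constraint (every one is followed by at
least two zeros, as long as the indices are in range), and `y = c + e` the received
vector.  Then for every `j`, at least two of the three values `y (3j), y (3j+1),
y (3j+2)` equal `d j`, and majority decoding of each length-3 block recovers `d`
exactly: all errors are corrected. -/
theorem repetition_code_corrects_spaced_errors (k : ℕ) (d : Fin k → ZMod 2)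
    (c e y : ℕ → ZMod 2)
    (hc : ∀ j : Fin k, c (3 * j) = d j ∧ c (3 * j + 1) = d j ∧ c (3 * j + 2) = d j)
    (he : ∀ i : ℕ, e i = 1 →
      (i + 1 < 3 * k → e (i + 1) = 0) ∧ (i + 2 < 3 * k → e (i + 2) = 0))
    (hy : ∀ i : ℕ, i < 3 * k → y i = c i + e i) :
    ∀ j : Fin k,
      2 ≤ ((({3 * (j : ℕ), 3 * (j : ℕ) + 1, 3 * (j : ℕ) + 2} : Finset ℕ)).filter
            (fun i => y i = d j)).card ∧
      maj (y (3 * j)) (y (3 * j + 1)) (y (3 * j + 2)) = d j := by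
  intro j
  obtain ⟨hc0, hc1, hc2⟩ := hc j
  have hj : (j : ℕ) < k := j.2
  have hy0 := hy (3 * (j : ℕ)) (by omega)
  have hy1 := hy (3 * (j : ℕ) + 1) (by omega)
  have hy2 := hy (3 * (j : ℕ) + 2) (by omega)
  have two : ∀ x : ZMod 2, x = 0 ∨ x = 1 := by decide
  have majA : ∀ a x : ZMod 2, maj x x a = x ∧ maj x a x = x ∧ maj a x x = x := by decide
  have key : (e (3*(j:ℕ)) = 0 ∧ e (3*(j:ℕ)+1) = 0) ∨
             (e (3*(j:ℕ)) = 0 ∧ e (3*(j:ℕ)+2) = 0) ∨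
             (e (3*(j:ℕ)+1) = 0 ∧ e (3*(j:ℕ)+2) = 0) := by
    rcases two (e (3*(j:ℕ))) with ha | ha
    · rcases two (e (3*(j:ℕ)+1)) with hb | hb
      · exact .inl ⟨ha, hb⟩
      · have h := (he _ hb).1 (by omega)
        have h2' : e (3*(j:ℕ)+2) = 0 := by
          have : 3*(j:ℕ)+1+1 = 3*(j:ℕ)+2 := by omega
          rwa [this] at h
        exact .inr (.inl ⟨ha, h2'⟩)
    · have h := he _ ha
      exact .inr (.inr ⟨h.1 (by omega), h.2 (by omega)⟩)
  have card2 : ∀ i1 ∈ ({3 * (j : ℕ), 3 * (j : ℕ) + 1, 3 * (j : ℕ) + 2} : Finset ℕ),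
      ∀ i2 ∈ ({3 * (j : ℕ), 3 * (j : ℕ) + 1, 3 * (j : ℕ) + 2} : Finset ℕ),
      i1 ≠ i2 → y i1 = d j → y i2 = d j →
      2 ≤ ((({3 * (j : ℕ), 3 * (j : ℕ) + 1, 3 * (j : ℕ) + 2} : Finset ℕ)).filter
            (fun i => y i = d j)).card := by
    intro i1 m1 i2 m2 hne e1 e2
    exact Finset.one_lt_card.2 ⟨i1, Finset.mem_filter.2 ⟨m1, e1⟩, i2,
      Finset.mem_filter.2 ⟨m2, e2⟩, hne⟩
  rcases key with ⟨h1, h2⟩ | ⟨h1, h2⟩ | ⟨h1, h2⟩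
  · have e1 : y (3*(j:ℕ)) = d j := by rw [hy0, hc0, h1, add_zero]
    have e2 : y (3*(j:ℕ)+1) = d j := by rw [hy1, hc1, h2, add_zero]
    refine ⟨card2 _ (by simp) _ (by simp) (by omega) e1 e2, ?_⟩
    rw [e1, e2]; exact (majA _ _).1
  · have e1 : y (3*(j:ℕ)) = d j := by rw [hy0, hc0, h1, add_zero]
    have e2 : y (3*(j:ℕ)+2) = d j := by rw [hy2, hc2, h2, add_zero]
    refine ⟨card2 _ (by simp) _ (by simp) (by omega) e1 e2, ?_⟩
    rw [e1, e2]; exact (majA _ _).2.1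
  · have e1 : y (3*(j:ℕ)+1) = d j := by rw [hy1, hc1, h1, add_zero]
    have e2 : y (3*(j:ℕ)+2) = d j := by rw [hy2, hc2, h2, add_zero]
    refine ⟨card2 _ (by simp) _ (by simp) (by omega) e1 e2, ?_⟩
    rw [e1, e2]; exact (majA _ _).2.2
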